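/- arXiv:0901.1422 — 3 statements merged into one kernel-verified Lean document; each statement's English description precedes it below -/
import Mathlib

section
/- Let $J$ be a homogeneous two-sided ideal in $\mathbb{C}\langle x_1, \ldots, x_d\rangle$ and let $H$ be a fixed infinite-dimensional separable Hilbert space. Define $Z(J) = \{(T_1,\ldots,T_d) \in B(H)^d : p(T_1,\ldots,T_d) = 0 \text{ for all } p \in J\}$ and $I(Z(J)) = \{p : p(T_1,\ldots,T_d) = 0 \text{ for all } (T_1,\ldots,T_d) \in Z(J)\}$. Then $I(Z(J)) = J$. -/
/-- The space of homogeneous elements of degree `n` of the free algebra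
`ℂ⟨x_1, …, x_d⟩`: the span of products of `n` generators. -/
noncomputable def freeGrade (d n : ℕ) : Submodule ℂ (FreeAlgebra ℂ (Fin d)) :=
  (Submodule.span ℂ (Set.range (FreeAlgebra.ι ℂ : Fin d → FreeAlgebra ℂ (Fin d)))) ^ n

noncomputable section NCNull

variable {d : ℕ}

/-- The monomial basis of the free algebra. -/
noncomputable def bW (d : ℕ) : Module.Basis (FreeMonoid (Fin d)) ℂ (FreeAlgebra ℂ (Fin d)) :=
  FreeAlgebra.basisFreeMonoid ℂ (Fin d)

lemma bW_def (w : FreeMonoid (Fin d)) :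
    bW d w = (FreeAlgebra.equivMonoidAlgebraFreeMonoid (R := ℂ) (X := Fin d)).symm
      (MonoidAlgebra.single w 1) := by
  simp [bW, FreeAlgebra.basisFreeMonoid, Module.Basis.map_apply]

lemma bW_one : bW d 1 = 1 := by
  rw [bW_def]
  exact map_one _

lemma bW_cons (i : Fin d) (w : FreeMonoid (Fin d)) :
    bW d (FreeMonoid.of i * w) = FreeAlgebra.ι ℂ i * bW d w := by
  rw [bW_def, bW_def]
  have h1 : (MonoidAlgebra.single (FreeMonoid.of i * w) (1:ℂ))
      = MonoidAlgebra.single (FreeMonoid.of i) (1:ℂ) * MonoidAlgebra.single w 1 := by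
    rw [MonoidAlgebra.single_mul_single, one_mul]
  rw [h1, map_mul]
  congr 1
  have : FreeAlgebra.equivMonoidAlgebraFreeMonoid (FreeAlgebra.ι ℂ i)
      = MonoidAlgebra.single (FreeMonoid.of i) (1:ℂ) := by
    simp [FreeAlgebra.equivMonoidAlgebraFreeMonoid]
  rw [← this, AlgEquiv.symm_apply_apply]

end NCNull
noncomputable section NCNull2
variable {d : ℕ}

lemma bW_mul (w v : FreeMonoid (Fin d)) : bW d (w * v) = bW d w * bW d v := by
  rw [bW_def, bW_def, bW_def, ← map_mul]
  congr 1
  rw [MonoidAlgebra.single_mul_single, one_mul]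

lemma bW_of (i : Fin d) : bW d (FreeMonoid.of i) = FreeAlgebra.ι ℂ i := by
  have := bW_cons i (1 : FreeMonoid (Fin d))
  rw [mul_one, bW_one, mul_one] at this
  exact this

lemma bW_mem_grade (w : FreeMonoid (Fin d)) : bW d w ∈ freeGrade d (FreeMonoid.length w) := by
  induction w using FreeMonoid.recOn with
  | one =>
    rw [bW_one]
    simpa [freeGrade] using (Submodule.one_le).mpr le_rfl
  | of_mul i w ih =>
    rw [bW_cons]
    have hlen : FreeMonoid.length (FreeMonoid.of i * w) = FreeMonoid.length w + 1 := by
      simp [FreeMonoid.length_mul, FreeMonoid.length_of, Nat.add_comm]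
    rw [hlen, freeGrade, pow_succ']
    exact Submodule.mul_mem_mul (Submodule.subset_span (Set.mem_range_self i)) ih

lemma freeGrade_le_span (m : ℕ) :
    freeGrade d m ≤ Submodule.span ℂ (bW d '' {w | FreeMonoid.length w = m}) := by
  induction m with
  | zero =>
    rw [freeGrade, pow_zero, Submodule.one_eq_span]
    refine Submodule.span_mono ?_
    rintro x rfl
    exact ⟨1, rfl, bW_one⟩
  | succ m ih =>
    rw [freeGrade, pow_succ']
    have h1 : Submodule.span ℂ (Set.range (FreeAlgebra.ι ℂ : Fin d → FreeAlgebra ℂ (Fin d)))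
        ≤ Submodule.span ℂ (bW d '' {w | FreeMonoid.length w = 1}) := by
      refine Submodule.span_mono ?_
      rintro x ⟨i, rfl⟩
      exact ⟨FreeMonoid.of i, by simp [FreeMonoid.length_of], bW_of i⟩
    refine le_trans (mul_le_mul' h1 ih) ?_
    rw [Submodule.span_mul_span]
    refine Submodule.span_le.mpr ?_
    intro x hx
    rw [Set.mem_mul] at hx
    obtain ⟨a, ⟨w1, hw1, rfl⟩, b, ⟨w2, hw2, rfl⟩, rfl⟩ := hx
    refine Submodule.subset_span ⟨w1 * w2, ?_, bW_mul w1 w2⟩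
    simp only [Set.mem_setOf_eq, FreeMonoid.length_mul] at *
    omega

end NCNull2
noncomputable section NCNull3
variable {d : ℕ}

/-- Projection onto the degree-`m` graded component. -/
noncomputable def prj (d m : ℕ) : FreeAlgebra ℂ (Fin d) →ₗ[ℂ] FreeAlgebra ℂ (Fin d) :=
  (bW d).constr ℂ (fun w => if FreeMonoid.length w = m then bW d w else 0)

/-- Truncation to degrees `≤ N`. -/
noncomputable def cut (d N : ℕ) : FreeAlgebra ℂ (Fin d) →ₗ[ℂ] FreeAlgebra ℂ (Fin d) :=
  (bW d).constr ℂ (fun w => if FreeMonoid.length w ≤ N then bW d w else 0)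

lemma prj_bW (m : ℕ) (w : FreeMonoid (Fin d)) :
    prj d m (bW d w) = if FreeMonoid.length w = m then bW d w else 0 :=
  Module.Basis.constr_basis _ _ _ _

lemma cut_bW (N : ℕ) (w : FreeMonoid (Fin d)) :
    cut d N (bW d w) = if FreeMonoid.length w ≤ N then bW d w else 0 :=
  Module.Basis.constr_basis _ _ _ _

lemma grade_eq_span (m : ℕ) :
    freeGrade d m = Submodule.span ℂ (bW d '' {w | FreeMonoid.length w = m}) := by
  refine le_antisymm (freeGrade_le_span m) (Submodule.span_le.mpr ?_)
  rintro x ⟨w, hw, rfl⟩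
  have := bW_mem_grade (d := d) w
  rwa [hw] at this

lemma cut_eq_sum_prj (N : ℕ) :
    cut d N = ∑ m ∈ Finset.range (N + 1), prj d m := by
  refine (bW d).ext fun w => ?_
  rw [LinearMap.sum_apply, cut_bW]
  simp only [prj_bW]
  rw [Finset.sum_ite_eq (Finset.range (N + 1)) (FreeMonoid.length w) (fun _ => bW d w)]
  simp [Nat.lt_succ_iff]

lemma prj_mem_grade (m : ℕ) (x : FreeAlgebra ℂ (Fin d)) : prj d m x ∈ freeGrade d m := by
  have hr : ∀ w : FreeMonoid (Fin d),
      (if FreeMonoid.length w = m then bW d w else 0) ∈ freeGrade d m := by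
    intro w
    split
    · next h => rw [← h]; exact bW_mem_grade w
    · exact zero_mem _
  rw [← (bW d).linearCombination_repr x, Finsupp.linearCombination_apply, map_finsuppSum]
  rw [Finsupp.sum]
  refine Submodule.sum_mem _ fun w _ => ?_
  rw [LinearMap.map_smul, prj_bW]
  exact Submodule.smul_mem _ _ (hr w)

lemma prj_grade_self {m : ℕ} {x : FreeAlgebra ℂ (Fin d)} (hx : x ∈ freeGrade d m) :
    prj d m x = x := by
  rw [grade_eq_span] at hx
  induction hx using Submodule.span_induction with
  | mem y hy =>
    obtain ⟨w, hw, rfl⟩ := hy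
    simp only [Set.mem_setOf_eq] at hw
    rw [prj_bW, if_pos hw]
  | zero => exact map_zero _
  | add y z _ _ hy hz => rw [map_add, hy, hz]
  | smul c y _ hy => rw [LinearMap.map_smul, hy]

lemma prj_grade_ne {n m : ℕ} {x : FreeAlgebra ℂ (Fin d)} (hx : x ∈ freeGrade d n)
    (hnm : n ≠ m) : prj d m x = 0 := by
  rw [grade_eq_span] at hx
  induction hx using Submodule.span_induction with
  | mem y hy =>
    obtain ⟨w, hw, rfl⟩ := hy
    simp only [Set.mem_setOf_eq] at hw
    rw [prj_bW, if_neg (by rw [hw]; exact hnm)]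
  | zero => exact map_zero _
  | add y z _ _ hy hz => rw [map_add, hy, hz, add_zero]
  | smul c y _ hy => rw [LinearMap.map_smul, hy, smul_zero]

lemma cut_eq_self_of_le {N : ℕ} {x : FreeAlgebra ℂ (Fin d)}
    (h : ∀ w ∈ ((bW d).repr x).support, FreeMonoid.length w ≤ N) :
    cut d N x = x := by
  conv_lhs => rw [← (bW d).linearCombination_repr x]
  rw [Finsupp.linearCombination_apply, map_finsuppSum]
  conv_rhs => rw [← (bW d).linearCombination_repr x, Finsupp.linearCombination_apply]
  refine Finsupp.sum_congr fun w hw => ?_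
  rw [LinearMap.map_smul, cut_bW, if_pos (h w hw)]

lemma exists_cut_eq_self (x : FreeAlgebra ℂ (Fin d)) :
    ∃ N0 : ℕ, ∀ N ≥ N0, cut d N x = x := by
  refine ⟨((bW d).repr x).support.sup FreeMonoid.length, fun N hN => cut_eq_self_of_le ?_⟩
  intro w hw
  exact le_trans (Finset.le_sup hw) hN

end NCNull3
noncomputable section NCNull4
variable {d : ℕ}

lemma len_cons (i : Fin d) (w : FreeMonoid (Fin d)) :
    FreeMonoid.length (FreeMonoid.of i * w) = FreeMonoid.length w + 1 := by
  simp [FreeMonoid.length_mul, FreeMonoid.length_of, Nat.add_comm]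

lemma prj_mem_ideal {J : Ideal (FreeAlgebra ℂ (Fin d))}
    (hhom : Submodule.restrictScalars ℂ J =
      Submodule.span ℂ {p : FreeAlgebra ℂ (Fin d) | p ∈ J ∧ ∃ n, p ∈ freeGrade d n})
    {x : FreeAlgebra ℂ (Fin d)} (hx : x ∈ J) (m : ℕ) : prj d m x ∈ J := by
  have hx' : x ∈ Submodule.span ℂ
      {p : FreeAlgebra ℂ (Fin d) | p ∈ J ∧ ∃ n, p ∈ freeGrade d n} := by
    rw [← hhom]; exact hx
  clear hx
  have : prj d m x ∈ Submodule.restrictScalars ℂ J := by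
    induction hx' using Submodule.span_induction with
    | mem y hy =>
      obtain ⟨hyJ, n, hyn⟩ := hy
      by_cases h : n = m
      · subst h; rw [prj_grade_self hyn]; exact hyJ
      · rw [prj_grade_ne hyn h]; exact zero_mem _
    | zero => rw [map_zero]; exact zero_mem _
    | add y z _ _ hy hz => rw [map_add]; exact add_mem hy hz
    | smul c y _ hy => rw [LinearMap.map_smul]; exact Submodule.smul_mem _ _ hy
  exact this

lemma cut_mem_ideal {J : Ideal (FreeAlgebra ℂ (Fin d))}
    (hhom : Submodule.restrictScalars ℂ J =
      Submodule.span ℂ {p : FreeAlgebra ℂ (Fin d) | p ∈ J ∧ ∃ n, p ∈ freeGrade d n})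
    {x : FreeAlgebra ℂ (Fin d)} (hx : x ∈ J) (N : ℕ) : cut d N x ∈ J := by
  rw [cut_eq_sum_prj, LinearMap.sum_apply]
  exact Ideal.sum_mem _ fun m _ => prj_mem_ideal hhom hx m

lemma cut_comp (N : ℕ) (i : Fin d) :
    (cut d N) ∘ₗ (LinearMap.mulLeft ℂ (FreeAlgebra.ι ℂ i)) ∘ₗ (cut d N)
      = (cut d N) ∘ₗ (LinearMap.mulLeft ℂ (FreeAlgebra.ι ℂ i)) := by
  refine (bW d).ext fun w => ?_
  simp only [LinearMap.comp_apply, LinearMap.mulLeft_apply]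
  rw [cut_bW]
  by_cases h : FreeMonoid.length w ≤ N
  · rw [if_pos h]
  · rw [if_neg h, mul_zero, map_zero, ← bW_cons, cut_bW,
      if_neg (by rw [len_cons]; omega)]

lemma cut_grade1_mul (N : ℕ) {a : FreeAlgebra ℂ (Fin d)}
    (ha : a ∈ Submodule.span ℂ
      (Set.range (FreeAlgebra.ι ℂ : Fin d → FreeAlgebra ℂ (Fin d))))
    (x : FreeAlgebra ℂ (Fin d)) :
    cut d N (a * cut d N x) = cut d N (a * x) := by
  induction ha using Submodule.span_induction with
  | mem y hy =>
    obtain ⟨i, rfl⟩ := hy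
    have := congrFun (congrArg (DFunLike.coe) (cut_comp N i)) x
    simpa using this
  | zero => simp
  | add y z _ _ hy hz => rw [add_mul, add_mul, map_add, map_add, hy, hz]
  | smul c y _ hy => rw [smul_mul_assoc, smul_mul_assoc, LinearMap.map_smul,
      LinearMap.map_smul, hy]

end NCNull4
noncomputable section NCNull5

variable {d : ℕ} (J : Ideal (FreeAlgebra ℂ (Fin d)))

/-- The quotient `ℂ⟨x⟩/J` as a `ℂ`-vector space. -/
abbrev Qmod (J : Ideal (FreeAlgebra ℂ (Fin d))) :=
  FreeAlgebra ℂ (Fin d) ⧸ (Submodule.restrictScalars ℂ J)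

def qmk : FreeAlgebra ℂ (Fin d) →ₗ[ℂ] Qmod J := (Submodule.restrictScalars ℂ J).mkQ

/-- Left multiplication by `a`, descended to the quotient. -/
def Lq (a : FreeAlgebra ℂ (Fin d)) : Qmod J →ₗ[ℂ] Qmod J :=
  Submodule.mapQ _ _ (LinearMap.mulLeft ℂ a)
    (fun x hx => by
      have : a * x ∈ J := Ideal.mul_mem_left J a hx
      exact this)

lemma Lq_apply (a x : FreeAlgebra ℂ (Fin d)) :
    Lq J a (qmk J x) = qmk J (a * x) := by
  simp [Lq, qmk, Submodule.mapQ_apply]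
  rfl

lemma Lq_add (a b : FreeAlgebra ℂ (Fin d)) : Lq J (a + b) = Lq J a + Lq J b := by
  refine Submodule.linearMap_qext _ ?_
  ext x
  simp only [LinearMap.comp_apply, Submodule.mkQ_apply, LinearMap.add_apply]
  show Lq J (a+b) (qmk J x) = Lq J a (qmk J x) + Lq J b (qmk J x)
  rw [Lq_apply, Lq_apply, Lq_apply, add_mul, map_add]

lemma Lq_smul (c : ℂ) (a : FreeAlgebra ℂ (Fin d)) : Lq J (c • a) = c • Lq J a := by
  refine Submodule.linearMap_qext _ ?_
  ext x
  simp only [LinearMap.comp_apply, Submodule.mkQ_apply, LinearMap.smul_apply]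
  show Lq J (c • a) (qmk J x) = c • (Lq J a (qmk J x))
  rw [Lq_apply, Lq_apply, smul_mul_assoc, LinearMap.map_smul]

lemma Lq_mul (a b : FreeAlgebra ℂ (Fin d)) : Lq J (a * b) = Lq J a ∘ₗ Lq J b := by
  refine Submodule.linearMap_qext _ ?_
  ext x
  simp only [LinearMap.comp_apply, Submodule.mkQ_apply]
  show Lq J (a*b) (qmk J x) = Lq J a (Lq J b (qmk J x))
  rw [Lq_apply, Lq_apply, Lq_apply, mul_assoc]

lemma Lq_zero_of_mem {a : FreeAlgebra ℂ (Fin d)}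
    (htwosided : ∀ a ∈ J, ∀ r : FreeAlgebra ℂ (Fin d), a * r ∈ J)
    (ha : a ∈ J) : Lq J a = 0 := by
  refine Submodule.linearMap_qext _ ?_
  ext x
  simp only [LinearMap.comp_apply, Submodule.mkQ_apply, LinearMap.zero_apply]
  show Lq J a (qmk J x) = 0
  rw [Lq_apply]
  exact (Submodule.Quotient.mk_eq_zero _).mpr (htwosided a ha x)

variable (hhom : Submodule.restrictScalars ℂ J =
      Submodule.span ℂ {p : FreeAlgebra ℂ (Fin d) | p ∈ J ∧ ∃ n, p ∈ freeGrade d n}) (N : ℕ)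

/-- Truncation descended to the quotient. -/
def cutQ : Qmod J →ₗ[ℂ] Qmod J :=
  Submodule.mapQ _ _ (cut d N) (fun x hx => cut_mem_ideal hhom hx N)

lemma cutQ_apply (x : FreeAlgebra ℂ (Fin d)) :
    cutQ J hhom N (qmk J x) = qmk J (cut d N x) := by
  simp [cutQ, qmk, Submodule.mapQ_apply]
  rfl

end NCNull5
noncomputable section NCNull6

variable {d : ℕ} (J : Ideal (FreeAlgebra ℂ (Fin d)))
variable (hhom : Submodule.restrictScalars ℂ J =
      Submodule.span ℂ {p : FreeAlgebra ℂ (Fin d) | p ∈ J ∧ ∃ n, p ∈ freeGrade d n}) (N : ℕ)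

/-- The (finite-dimensional) range of the truncation on the quotient. -/
def Rsub : Submodule ℂ (Qmod J) := LinearMap.range (cutQ J hhom N)

lemma cut_mem_span (x : FreeAlgebra ℂ (Fin d)) :
    cut d N x ∈ Submodule.span ℂ (bW d '' {w | FreeMonoid.length w ≤ N}) := by
  rw [cut_eq_sum_prj, LinearMap.sum_apply]
  refine Submodule.sum_mem _ fun m hm => ?_
  have h1 := prj_mem_grade m x
  rw [grade_eq_span] at h1
  refine Submodule.span_le.mpr ?_ h1
  refine Set.image_mono ?_ |>.trans Submodule.subset_span
  intro w hw
  simp only [Set.mem_setOf_eq] at *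
  rw [hw]
  exact Nat.lt_succ_iff.mp (Finset.mem_range.mp hm)

instance Rsub_findim : FiniteDimensional ℂ (Rsub J hhom N) := by
  have hfin : ({w : FreeMonoid (Fin d) | FreeMonoid.length w ≤ N}).Finite :=
    List.finite_length_le (Fin d) N
  have hfin2 : ((qmk J ∘ bW d) '' {w | FreeMonoid.length w ≤ N}).Finite := hfin.image _
  have : FiniteDimensional ℂ
      (Submodule.span ℂ ((qmk J ∘ bW d) '' {w | FreeMonoid.length w ≤ N})) :=
    FiniteDimensional.span_of_finite ℂ hfin2
  refine Submodule.finiteDimensional_of_le (S₂ :=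
    Submodule.span ℂ ((qmk J ∘ bW d) '' {w | FreeMonoid.length w ≤ N})) ?_
  rintro y ⟨x, rfl⟩
  obtain ⟨z, rfl⟩ := Submodule.mkQ_surjective _ x
  show cutQ J hhom N (qmk J z) ∈ _
  rw [cutQ_apply]
  have := cut_mem_span (d := d) N z
  have himg := Submodule.map_span_le (qmk J)
    (bW d '' {w | FreeMonoid.length w ≤ N})
    (Submodule.span ℂ ((qmk J ∘ bW d) '' {w | FreeMonoid.length w ≤ N}))
  refine himg.mpr ?_ ⟨_, this, rfl⟩
  rintro y ⟨w, hw, rfl⟩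
  exact Submodule.subset_span ⟨w, hw, rfl⟩

/-- Truncated left multiplication, as an endomorphism of `Rsub`. -/
def Phi (a : FreeAlgebra ℂ (Fin d)) : Module.End ℂ (Rsub J hhom N) :=
  LinearMap.codRestrict _ ((cutQ J hhom N ∘ₗ Lq J a) ∘ₗ (Rsub J hhom N).subtype)
    (fun v => LinearMap.mem_range_self _ _)

lemma Phi_apply (a : FreeAlgebra ℂ (Fin d)) (v : Rsub J hhom N) :
    (Phi J hhom N a v : Qmod J) = cutQ J hhom N (Lq J a (v : Qmod J)) := rfl

lemma Phi_add (a b : FreeAlgebra ℂ (Fin d)) :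
    Phi J hhom N (a + b) = Phi J hhom N a + Phi J hhom N b := by
  ext v
  show (Phi J hhom N (a+b) v : Qmod J) = (Phi J hhom N a v : Qmod J) + Phi J hhom N b v
  rw [Phi_apply, Phi_apply, Phi_apply, Lq_add]
  simp

lemma Phi_smul (c : ℂ) (a : FreeAlgebra ℂ (Fin d)) :
    Phi J hhom N (c • a) = c • Phi J hhom N a := by
  ext v
  show (Phi J hhom N (c • a) v : Qmod J) = c • (Phi J hhom N a v : Qmod J)
  rw [Phi_apply, Phi_apply, Lq_smul]
  simp

lemma Phi_zero : Phi J hhom N 0 = 0 := by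
  have := Phi_smul J hhom N 0 0
  simpa using this

end NCNull6
noncomputable section NCNull7

variable {d : ℕ} (J : Ideal (FreeAlgebra ℂ (Fin d)))
variable (hhom : Submodule.restrictScalars ℂ J =
      Submodule.span ℂ {p : FreeAlgebra ℂ (Fin d) | p ∈ J ∧ ∃ n, p ∈ freeGrade d n}) (N : ℕ)

lemma cutQ_Lq_cutQ {a : FreeAlgebra ℂ (Fin d)}
    (ha : a ∈ Submodule.span ℂ
      (Set.range (FreeAlgebra.ι ℂ : Fin d → FreeAlgebra ℂ (Fin d)))) (y : Qmod J) :
    cutQ J hhom N (Lq J a (cutQ J hhom N y)) = cutQ J hhom N (Lq J a y) := by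
  obtain ⟨x, rfl⟩ := Submodule.mkQ_surjective _ y
  show cutQ J hhom N (Lq J a (cutQ J hhom N (qmk J x))) = cutQ J hhom N (Lq J a (qmk J x))
  rw [cutQ_apply, Lq_apply, cutQ_apply, Lq_apply, cutQ_apply, cut_grade1_mul N ha]

lemma Phi_mul {a : FreeAlgebra ℂ (Fin d)}
    (ha : a ∈ Submodule.span ℂ
      (Set.range (FreeAlgebra.ι ℂ : Fin d → FreeAlgebra ℂ (Fin d))))
    (b : FreeAlgebra ℂ (Fin d)) :
    Phi J hhom N (a * b) = Phi J hhom N a * Phi J hhom N b := by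
  ext v
  show (Phi J hhom N (a * b) v : Qmod J) = (Phi J hhom N a (Phi J hhom N b v) : Qmod J)
  rw [Phi_apply, Phi_apply, Phi_apply, Lq_mul]
  exact (cutQ_Lq_cutQ J hhom N ha _).symm

/-- The operators on the truncated quotient. -/
def Nop : Fin d → Module.End ℂ (Rsub J hhom N) := fun i => Phi J hhom N (FreeAlgebra.ι ℂ i)

lemma liftD1 : ∀ q ∈ Submodule.span ℂ
      (Set.range (FreeAlgebra.ι ℂ : Fin d → FreeAlgebra ℂ (Fin d))),
    FreeAlgebra.lift ℂ (Nop J hhom N) q = Phi J hhom N q := by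
  intro q hq
  induction hq using Submodule.span_induction with
  | mem y hy =>
    obtain ⟨i, rfl⟩ := hy
    rw [FreeAlgebra.lift_ι_apply]
    rfl
  | zero => rw [map_zero, Phi_zero]
  | add y z _ _ hy hz => rw [map_add, hy, hz, Phi_add]
  | smul c y _ hy => rw [map_smul, hy, Phi_smul]

lemma liftD : ∀ k, 1 ≤ k → ∀ q ∈ freeGrade d k,
    FreeAlgebra.lift ℂ (Nop J hhom N) q = Phi J hhom N q := by
  intro k hk
  induction k, hk using Nat.le_induction with
  | base =>
    intro q hq
    rw [freeGrade, pow_one] at hq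
    exact liftD1 J hhom N q hq
  | succ k hk ih =>
    intro q hq
    rw [freeGrade, pow_succ'] at hq
    refine Submodule.mul_induction_on hq ?_ ?_
    · intro a ha b hb
      rw [map_mul, ih b hb, Phi_mul J hhom N ha b, liftD1 J hhom N a ha]
    · intro x y hx hy
      rw [map_add, Phi_add, hx, hy]

end NCNull7
noncomputable section NCNull8

variable {d : ℕ} {J : Ideal (FreeAlgebra ℂ (Fin d))}
variable (hhom : Submodule.restrictScalars ℂ J =
      Submodule.span ℂ {p : FreeAlgebra ℂ (Fin d) | p ∈ J ∧ ∃ n, p ∈ freeGrade d n}) (N : ℕ)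

lemma grade0_struct {x : FreeAlgebra ℂ (Fin d)} (hx : x ∈ freeGrade d 0) :
    ∃ c : ℂ, x = c • 1 := by
  rw [freeGrade, pow_zero, Submodule.one_eq_span, Submodule.mem_span_singleton] at hx
  obtain ⟨c, hc⟩ := hx
  exact ⟨c, hc.symm⟩

lemma prj0_eq_zero (hhom : Submodule.restrictScalars ℂ J =
      Submodule.span ℂ {p : FreeAlgebra ℂ (Fin d) | p ∈ J ∧ ∃ n, p ∈ freeGrade d n})
    (hone : (1 : FreeAlgebra ℂ (Fin d)) ∉ J)
    {q : FreeAlgebra ℂ (Fin d)} (hq : q ∈ J) : prj d 0 q = 0 := by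
  obtain ⟨c, hc⟩ := grade0_struct (prj_mem_grade 0 q)
  have hcJ : c • (1 : FreeAlgebra ℂ (Fin d)) ∈ J := hc ▸ prj_mem_ideal hhom hq 0
  by_cases h : c = 0
  · rw [hc, h, zero_smul]
  · exfalso
    apply hone
    have : (c⁻¹ • (c • (1 : FreeAlgebra ℂ (Fin d)))) ∈ Submodule.restrictScalars ℂ J :=
      Submodule.smul_mem _ _ hcJ
    rwa [smul_smul, inv_mul_cancel₀ h, one_smul] at this

lemma Phi_zero_of_mem (htwosided : ∀ a ∈ J, ∀ r : FreeAlgebra ℂ (Fin d), a * r ∈ J)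
    {a : FreeAlgebra ℂ (Fin d)} (ha : a ∈ J) : Phi J hhom N a = 0 := by
  ext v
  show (Phi J hhom N a v : Qmod J) = 0
  rw [Phi_apply, Lq_zero_of_mem J htwosided ha]
  simp

/-- Lemma E : the tuple `Nop` annihilates `J`. -/
lemma liftNop_mem_J (htwosided : ∀ a ∈ J, ∀ r : FreeAlgebra ℂ (Fin d), a * r ∈ J)
    (hone : (1 : FreeAlgebra ℂ (Fin d)) ∉ J)
    {q : FreeAlgebra ℂ (Fin d)} (hq : q ∈ J) :
    FreeAlgebra.lift ℂ (Nop J hhom N) q = 0 := by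
  obtain ⟨N0, hN0⟩ := exists_cut_eq_self q
  have hq' : q = ∑ m ∈ Finset.range (N0 + 1), prj d m q := by
    conv_lhs => rw [← hN0 N0 le_rfl]
    rw [cut_eq_sum_prj, LinearMap.sum_apply]
  rw [hq', map_sum]
  refine Finset.sum_eq_zero fun m _ => ?_
  rcases Nat.eq_zero_or_pos m with hm | hm
  · subst hm
    rw [prj0_eq_zero hhom hone hq, map_zero]
  · rw [liftD J hhom N m hm _ (prj_mem_grade m q),
      Phi_zero_of_mem hhom N htwosided (prj_mem_ideal hhom hq m)]

lemma cut_one : cut d N (1 : FreeAlgebra ℂ (Fin d)) = 1 := by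
  have h := cut_bW (d := d) N 1
  rw [bW_one] at h
  rw [h, if_pos]
  exact Nat.zero_le N

def vone : Rsub J hhom N :=
  ⟨qmk J 1, ⟨qmk J 1, by rw [cutQ_apply, cut_one]⟩⟩

lemma lift_prj_vone (m : ℕ) (p : FreeAlgebra ℂ (Fin d)) :
    ((FreeAlgebra.lift ℂ (Nop J hhom N) (prj d m p)) (vone hhom N) : Qmod J)
      = qmk J (cut d N (prj d m p)) := by
  rcases Nat.eq_zero_or_pos m with hm | hm
  · subst hm
    obtain ⟨c, hc⟩ := grade0_struct (prj_mem_grade 0 p)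
    rw [hc, map_smul, map_one]
    show (c • (vone hhom N) : Rsub J hhom N).val = qmk J (cut d N (c • 1))
    rw [LinearMap.map_smul, cut_one]
    show c • (qmk J 1) = qmk J (c • 1)
    rw [LinearMap.map_smul]
  · rw [liftD J hhom N m hm _ (prj_mem_grade m p), Phi_apply]
    show cutQ J hhom N (Lq J _ (qmk J 1)) = _
    rw [Lq_apply, mul_one, cutQ_apply]

/-- Lemma F : recovering `p` mod `J` from the action on `vone`. -/
lemma lift_vone (p : FreeAlgebra ℂ (Fin d)) (hN : cut d N p = p) :
    ((FreeAlgebra.lift ℂ (Nop J hhom N) p) (vone hhom N) : Qmod J) = qmk J p := by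
  obtain ⟨N0, hN0⟩ := exists_cut_eq_self p
  have hp' : p = ∑ m ∈ Finset.range (N0 + 1), prj d m p := by
    conv_lhs => rw [← hN0 N0 le_rfl]
    rw [cut_eq_sum_prj, LinearMap.sum_apply]
  conv_lhs => rw [hp', map_sum]
  rw [LinearMap.sum_apply]
  rw [AddSubmonoidClass.coe_finset_sum]
  have : ∀ m ∈ Finset.range (N0 + 1),
      ((FreeAlgebra.lift ℂ (Nop J hhom N) (prj d m p)) (vone hhom N) : Qmod J)
        = qmk J (cut d N (prj d m p)) := fun m _ => lift_prj_vone hhom N m p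
  rw [Finset.sum_congr rfl this]
  have : ∑ m ∈ Finset.range (N0 + 1), qmk J (cut d N (prj d m p))
      = qmk J (cut d N (∑ m ∈ Finset.range (N0 + 1), prj d m p)) := by
    rw [map_sum, map_sum]
  rw [this, ← hp', hN]

end NCNull8
noncomputable section NCNull9

variable {H : Type*} [NormedAddCommGroup H] [InnerProductSpace ℂ H] [CompleteSpace H]
variable {V : Type*} [AddCommGroup V] [Module ℂ V] [FiniteDimensional ℂ V]
variable (W : Submodule ℂ H) [FiniteDimensional ℂ W] (e : V ≃ₗ[ℂ] W)

/-- Conjugating an endomorphism of `V` to a bounded operator on `H` supported on `W`. -/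
def conjOp (S : Module.End ℂ V) : H →L[ℂ] H :=
  W.subtypeL ∘L (LinearMap.toContinuousLinearMap
    (e.toLinearMap ∘ₗ (S ∘ₗ e.symm.toLinearMap))) ∘L (W.orthogonalProjectionOnto)

lemma conjOp_apply (S : Module.End ℂ V) (x : H) :
    conjOp W e S x = ((e (S (e.symm (W.orthogonalProjectionOnto x)))) : H) := rfl

lemma conjOp_coe (S : Module.End ℂ V) (w : W) :
    conjOp W e S (w : H) = ((e (S (e.symm w))) : H) := by
  rw [conjOp_apply, Submodule.orthogonalProjectionOnto_mem_subspace_eq_self]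

lemma conjOp_comp (S1 S2 : Module.End ℂ V) :
    conjOp W e S1 ∘L conjOp W e S2 = conjOp W e (S1 * S2) := by
  ext x
  show conjOp W e S1 (conjOp W e S2 x) = _
  rw [conjOp_apply W e S2 x, conjOp_coe, LinearEquiv.symm_apply_apply]
  rfl

lemma conjOp_zero : conjOp W e 0 = 0 := by
  ext x
  simp [conjOp_apply]

lemma conjOp_add (S1 S2 : Module.End ℂ V) :
    conjOp W e (S1 + S2) = conjOp W e S1 + conjOp W e S2 := by
  ext x
  simp [conjOp_apply]

lemma conjOp_smul (c : ℂ) (S : Module.End ℂ V) :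
    conjOp W e (c • S) = c • conjOp W e S := by
  ext x
  simp [conjOp_apply]

/-- `conjOp` as a linear map. -/
def conjOpL : Module.End ℂ V →ₗ[ℂ] (H →L[ℂ] H) where
  toFun := conjOp W e
  map_add' := conjOp_add W e
  map_smul' := conjOp_smul W e

lemma conjOp_perp (S : Module.End ℂ V) {u : H} (hu : u ∈ Wᗮ) :
    conjOp W e S u = 0 := by
  rw [conjOp_apply, Submodule.orthogonalProjectionOnto_apply_of_mem_orthogonal hu]
  simp

lemma conjOp_inj {S : Module.End ℂ V} (h : conjOp W e S = 0) : S = 0 := by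
  ext v
  have := congrFun (congrArg DFunLike.coe h) ((e v : H))
  rw [conjOp_coe, LinearEquiv.symm_apply_apply] at this
  have h2 : (e (S v) : H) = 0 := this
  have h3 : e (S v) = 0 := Subtype.ext h2
  simpa using congrArg e.symm h3

end NCNull9
noncomputable section NCNull10

variable {d : ℕ} {H : Type*} [NormedAddCommGroup H] [InnerProductSpace ℂ H] [CompleteSpace H]
variable {V : Type*} [AddCommGroup V] [Module ℂ V] [FiniteDimensional ℂ V]
variable (W : Submodule ℂ H) [FiniteDimensional ℂ W] (e : V ≃ₗ[ℂ] W)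

lemma liftT1 (Sop : Fin d → Module.End ℂ V) :
    ∀ q ∈ Submodule.span ℂ
      (Set.range (FreeAlgebra.ι ℂ : Fin d → FreeAlgebra ℂ (Fin d))),
    FreeAlgebra.lift ℂ (fun i => conjOp W e (Sop i)) q
      = conjOp W e (FreeAlgebra.lift ℂ Sop q) := by
  intro q hq
  induction hq using Submodule.span_induction with
  | mem y hy =>
    obtain ⟨i, rfl⟩ := hy
    rw [FreeAlgebra.lift_ι_apply, FreeAlgebra.lift_ι_apply]
  | zero => rw [map_zero, map_zero, conjOp_zero]
  | add y z _ _ hy hz => rw [map_add, map_add, hy, hz, conjOp_add]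
  | smul c y _ hy => rw [map_smul, map_smul, hy, conjOp_smul]

lemma liftT_eq (Sop : Fin d → Module.End ℂ V) :
    ∀ k, 1 ≤ k → ∀ q ∈ freeGrade d k,
    FreeAlgebra.lift ℂ (fun i => conjOp W e (Sop i)) q
      = conjOp W e (FreeAlgebra.lift ℂ Sop q) := by
  intro k hk
  induction k, hk using Nat.le_induction with
  | base =>
    intro q hq
    rw [freeGrade, pow_one] at hq
    exact liftT1 W e Sop q hq
  | succ k hk ih =>
    intro q hq
    rw [freeGrade, pow_succ'] at hq
    refine Submodule.mul_induction_on hq ?_ ?_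
    · intro a ha b hb
      have ha1 : a ∈ freeGrade d 1 := by rw [freeGrade, pow_one]; exact ha
      rw [map_mul, map_mul, ih b hb, liftT1 W e Sop a ha]
      rw [show conjOp W e (FreeAlgebra.lift ℂ Sop a) * conjOp W e (FreeAlgebra.lift ℂ Sop b)
          = conjOp W e (FreeAlgebra.lift ℂ Sop a) ∘L conjOp W e (FreeAlgebra.lift ℂ Sop b)
        from rfl, conjOp_comp]
    · intro x y hx hy
      rw [map_add, map_add, hx, hy, conjOp_add]

lemma liftT_zero_of_mem {J : Ideal (FreeAlgebra ℂ (Fin d))}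
    (hhom : Submodule.restrictScalars ℂ J =
      Submodule.span ℂ {p : FreeAlgebra ℂ (Fin d) | p ∈ J ∧ ∃ n, p ∈ freeGrade d n})
    (htwosided : ∀ a ∈ J, ∀ r : FreeAlgebra ℂ (Fin d), a * r ∈ J)
    (hone : (1 : FreeAlgebra ℂ (Fin d)) ∉ J) (N : ℕ)
    (e : Rsub J hhom N ≃ₗ[ℂ] W) {q : FreeAlgebra ℂ (Fin d)} (hq : q ∈ J) :
    FreeAlgebra.lift ℂ (fun i => conjOp W e (Nop J hhom N i)) q = 0 := by
  obtain ⟨N0, hN0⟩ := exists_cut_eq_self q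
  have hq' : q = ∑ m ∈ Finset.range (N0 + 1), prj d m q := by
    conv_lhs => rw [← hN0 N0 le_rfl]
    rw [cut_eq_sum_prj, LinearMap.sum_apply]
  rw [hq', map_sum]
  refine Finset.sum_eq_zero fun m _ => ?_
  rcases Nat.eq_zero_or_pos m with hm | hm
  · subst hm
    rw [prj0_eq_zero hhom hone hq, map_zero]
  · rw [liftT_eq W e (Nop J hhom N) m hm _ (prj_mem_grade m q),
      liftD J hhom N m hm _ (prj_mem_grade m q),
      Phi_zero_of_mem hhom N htwosided (prj_mem_ideal hhom hq m), conjOp_zero]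

end NCNull10
/-- Noncommutative projective Nullstellensatz: if `J` is a homogeneous two-sided ideal of
`ℂ⟨x_1, …, x_d⟩` and `H` is an infinite-dimensional separable Hilbert space, then
`I(Z(J)) = J`, where `Z(J)` is the set of `d`-tuples of bounded operators annihilating `J`. -/
theorem stmt7 (d : ℕ) (H : Type*) [NormedAddCommGroup H] [InnerProductSpace ℂ H]
    [CompleteSpace H] [TopologicalSpace.SeparableSpace H]
    (hinf : ¬ FiniteDimensional ℂ H)
    (J : Ideal (FreeAlgebra ℂ (Fin d)))
    (htwosided : ∀ a ∈ J, ∀ r : FreeAlgebra ℂ (Fin d), a * r ∈ J)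
    (hhom : Submodule.restrictScalars ℂ J =
      Submodule.span ℂ {p : FreeAlgebra ℂ (Fin d) | p ∈ J ∧ ∃ n, p ∈ freeGrade d n}) :
    {p : FreeAlgebra ℂ (Fin d) |
        ∀ T : Fin d → (H →L[ℂ] H),
          (∀ q ∈ J, FreeAlgebra.lift ℂ T q = 0) → FreeAlgebra.lift ℂ T p = 0}
      = (J : Set (FreeAlgebra ℂ (Fin d))) := by
  have hHnt : Nontrivial H := by
    by_contra h
    exact hinf (by
      have : Subsingleton H := not_nontrivial_iff_subsingleton.mp h
      exact Module.Finite.of_basis (Module.Basis.empty H (ι := Fin 0)))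
  ext p
  simp only [Set.mem_setOf_eq, SetLike.mem_coe]
  constructor
  swap
  · intro hp T hT
    exact hT p hp
  intro hp
  by_cases hone : (1 : FreeAlgebra ℂ (Fin d)) ∈ J
  · exact J.eq_top_iff_one.mpr hone ▸ Submodule.mem_top
  -- main case : 1 ∉ J
  obtain ⟨N, hNall⟩ := exists_cut_eq_self p
  have hN : cut d N p = p := hNall N le_rfl
  have hrank : ((Module.finrank ℂ (Rsub J hhom N) : ℕ) : Cardinal) ≤ Module.rank ℂ H := by
    have h1 : ¬ (Module.rank ℂ H < Cardinal.aleph0) := by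
      rw [Module.rank_lt_aleph0_iff]
      exact hinf
    exact le_trans (Cardinal.nat_lt_aleph0 _).le (not_lt.mp h1)
  obtain ⟨f, hf⟩ := exists_linearIndependent_of_le_rank hrank
  set W : Submodule ℂ H := Submodule.span ℂ (Set.range f) with hW
  haveI : FiniteDimensional ℂ W := FiniteDimensional.span_of_finite ℂ (Set.finite_range f)
  have hrk : Module.finrank ℂ (Rsub J hhom N) = Module.finrank ℂ W := by
    rw [hW, finrank_span_eq_card hf, Fintype.card_fin]
  let e : Rsub J hhom N ≃ₗ[ℂ] W := LinearEquiv.ofFinrankEq _ _ hrk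
  set T : Fin d → (H →L[ℂ] H) := fun i => conjOp W e (Nop J hhom N i) with hT
  have hTJ : ∀ q ∈ J, FreeAlgebra.lift ℂ T q = 0 := fun q hq =>
    liftT_zero_of_mem W hhom htwosided hone N e hq
  have hTp : FreeAlgebra.lift ℂ T p = 0 := hp T hTJ
  -- decompose p
  have hdecomp : p = ∑ m ∈ Finset.range (N + 1), prj d m p := by
    conv_lhs => rw [← hN]
    rw [cut_eq_sum_prj, LinearMap.sum_apply]
  obtain ⟨c, hc⟩ := grade0_struct (prj_mem_grade 0 p)
  set B : Module.End ℂ (Rsub J hhom N) :=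
    ∑ i ∈ Finset.range N, FreeAlgebra.lift ℂ (Nop J hhom N) (prj d (i + 1) p) with hB
  have hTsum : FreeAlgebra.lift ℂ T p = conjOp W e B + c • 1 := by
    conv_lhs => rw [hdecomp, map_sum]
    rw [Finset.sum_range_succ']
    congr 1
    · rw [hB, show conjOp W e (∑ i ∈ Finset.range N,
          FreeAlgebra.lift ℂ (Nop J hhom N) (prj d (i + 1) p))
        = conjOpL W e (∑ i ∈ Finset.range N,
          FreeAlgebra.lift ℂ (Nop J hhom N) (prj d (i + 1) p)) from rfl, map_sum]
      refine Finset.sum_congr rfl fun i _ => ?_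
      exact liftT_eq W e (Nop J hhom N) (i + 1) (Nat.succ_le_succ (Nat.zero_le i)) _
        (prj_mem_grade _ p)
    · rw [hc, map_smul, map_one]
  -- find a unit vector orthogonal to W
  have hWne : W ≠ ⊤ := by
    intro h
    apply hinf
    haveI : FiniteDimensional ℂ (⊤ : Submodule ℂ H) := h ▸ ‹FiniteDimensional ℂ W›
    exact (Submodule.topEquiv (R := ℂ) (M := H)).finiteDimensional
  have hperp : Wᗮ ≠ ⊥ := fun h => hWne (Submodule.orthogonal_eq_bot_iff.mp h)
  obtain ⟨u, huW, hune⟩ := Submodule.exists_mem_ne_zero_of_ne_bot hperp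
  have hc0 : c = 0 := by
    have h0 : (conjOp W e B + c • (1 : H →L[ℂ] H)) u = 0 := by
      rw [← hTsum, hTp]; rfl
    rw [ContinuousLinearMap.add_apply, conjOp_perp W e B huW,
      ContinuousLinearMap.smul_apply, ContinuousLinearMap.one_apply, zero_add] at h0
    exact (smul_eq_zero.mp h0).resolve_right hune
  have hBzero : B = 0 := by
    apply conjOp_inj W e
    have : conjOp W e B + c • (1 : H →L[ℂ] H) = 0 := by rw [← hTsum, hTp]
    rwa [hc0, zero_smul, add_zero] at this
  have hNop : FreeAlgebra.lift ℂ (Nop J hhom N) p = 0 := by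
    conv_lhs => rw [hdecomp, map_sum]
    rw [Finset.sum_range_succ', ← hB, hBzero]
    have hp0 : prj d 0 p = 0 := by rw [hc, hc0, zero_smul]
    rw [hp0, map_zero, add_zero]
  have hv := lift_vone hhom N p hN
  rw [hNop] at hv
  have hq0 : qmk J p = 0 := by
    rw [← hv]
    rfl
  exact (Submodule.Quotient.mk_eq_zero _).mp hq0
end

section
/- Let $J$ be a homogeneous two-sided ideal in $\mathbb{C}\langle x_1,\ldots,x_d\rangle$ and let $H$ be an infinite-dimensional separable Hilbert space. Then $Z(J) = \{(0,\ldots,0)\}$ (the zero tuple in $B(H)^d$) if and only if $J$ is the ideal generated by $x_1, \ldots, x_d$. -/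
lemma span_gen_le (d : ℕ) :
    Submodule.span ℂ (Set.range (FreeAlgebra.ι ℂ : Fin d → FreeAlgebra ℂ (Fin d))) ≤
      Submodule.restrictScalars ℂ
        (Ideal.span (Set.range (FreeAlgebra.ι ℂ : Fin d → FreeAlgebra ℂ (Fin d)))) :=
  Submodule.span_le.2 fun _ hx => Ideal.subset_span hx

lemma freeGrade_le_span_s8 (d n : ℕ) :
    freeGrade d (n + 1) ≤ Submodule.restrictScalars ℂ
      (Ideal.span (Set.range (FreeAlgebra.ι ℂ : Fin d → FreeAlgebra ℂ (Fin d)))) := by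
  rw [freeGrade, pow_succ]
  exact Submodule.mul_le.2 fun a _ b hb => Ideal.mul_mem_left _ a (span_gen_le d hb)

/-- For a homogeneous two-sided ideal `J` of `ℂ⟨x_1, …, x_d⟩` and an infinite-dimensional
separable Hilbert space `H`, the zero set `Z(J) ⊆ B(H)^d` is the singleton of the zero tuple
if and only if `J` is the ideal generated by `x_1, …, x_d`. -/
theorem stmt8 (d : ℕ) (H : Type*) [NormedAddCommGroup H] [InnerProductSpace ℂ H]
    [CompleteSpace H] [TopologicalSpace.SeparableSpace H]
    (hinf : ¬ FiniteDimensional ℂ H)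
    (J : Ideal (FreeAlgebra ℂ (Fin d)))
    (htwosided : ∀ a ∈ J, ∀ r : FreeAlgebra ℂ (Fin d), a * r ∈ J)
    (hhom : Submodule.restrictScalars ℂ J =
      Submodule.span ℂ {p : FreeAlgebra ℂ (Fin d) | p ∈ J ∧ ∃ n, p ∈ freeGrade d n}) :
    {T : Fin d → (H →L[ℂ] H) | ∀ p ∈ J, FreeAlgebra.lift ℂ T p = 0} = {0}
      ↔ J = Ideal.span (Set.range (FreeAlgebra.ι ℂ : Fin d → FreeAlgebra ℂ (Fin d))) := by
  classical
  -- H is nontrivial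
  have hne : Nontrivial H := by
    by_contra h
    rw [not_nontrivial_iff_subsingleton] at h
    exact hinf inferInstance
  obtain ⟨v, hv⟩ := exists_ne (0 : H)
  -- a nonzero vector orthogonal to v
  have hspan_ne : (ℂ ∙ v) ≠ (⊤ : Submodule ℂ H) := by
    intro h
    refine hinf (Module.finite_def.2 ⟨{v}, ?_⟩)
    simpa using h
  have horth : ((ℂ ∙ v)ᗮ : Submodule ℂ H) ≠ ⊥ := by
    intro h
    exact hspan_ne (Submodule.orthogonal_eq_bot_iff.1 h)
  obtain ⟨w, hw_mem, hw⟩ := (Submodule.ne_bot_iff _).1 horth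
  -- the square-zero rank-one operator S
  set S : H →L[ℂ] H := (innerSL ℂ v).smulRight w with hSdef
  have hSapp : ∀ x : H, S x = (inner ℂ v x : ℂ) • w := fun x => rfl
  have hvw : (inner ℂ v w : ℂ) = 0 :=
    (Submodule.mem_orthogonal _ _).1 hw_mem v (Submodule.mem_span_singleton_self v)
  have hSS : S * S = 0 := by
    ext x
    simp [ContinuousLinearMap.mul_apply, hSapp, inner_smul_right, hvw]
  have hS0 : S ≠ 0 := by
    intro h
    have h2 : S v = 0 := by rw [h]; rfl
    rw [hSapp] at h2
    rcases smul_eq_zero.1 h2 with h3 | h3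
    · exact hv (inner_self_eq_zero.1 h3)
    · exact hw h3
  have h1CLM : (1 : H →L[ℂ] H) ≠ 0 := by
    intro h
    have := congrArg (fun f : H →L[ℂ] H => f v) h
    simp at this
    exact hv this
  -- degree ≥ 2 elements vanish on any tuple of multiples of S
  have hdeg2 : ∀ (T : Fin d → H →L[ℂ] H), (∀ i, ∃ c : ℂ, T i = c • S) →
      ∀ n, ∀ q ∈ freeGrade d (n + 2), FreeAlgebra.lift ℂ T q = 0 := by
    intro T hT n q hq
    have h1 : Submodule.map (FreeAlgebra.lift ℂ T).toLinearMap
        (Submodule.span ℂ (Set.range (FreeAlgebra.ι ℂ : Fin d → FreeAlgebra ℂ (Fin d))))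
        ≤ (ℂ ∙ S) := by
      rw [Submodule.map_span, Submodule.span_le]
      rintro _ ⟨_, ⟨i, rfl⟩, rfl⟩
      obtain ⟨c, hc⟩ := hT i
      simp only [AlgHom.toLinearMap_apply, FreeAlgebra.lift_ι_apply, SetLike.mem_coe]
      exact Submodule.mem_span_singleton.2 ⟨c, hc.symm⟩
    have h2 : (ℂ ∙ S) * (ℂ ∙ S) ≤ ⊥ := Submodule.mul_le.2 (by
      rintro a ha b hb
      obtain ⟨ca, rfl⟩ := Submodule.mem_span_singleton.1 ha
      obtain ⟨cb, rfl⟩ := Submodule.mem_span_singleton.1 hb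
      simp [smul_mul_assoc, mul_smul_comm, hSS])
    have hpow : ∀ m, Submodule.map (FreeAlgebra.lift ℂ T).toLinearMap
        ((Submodule.span ℂ (Set.range (FreeAlgebra.ι ℂ : Fin d → FreeAlgebra ℂ (Fin d)))) ^ m)
        ≤ (ℂ ∙ S) ^ m := by
      intro m
      rw [Submodule.map_pow]
      induction m with
      | zero => simp
      | succ k ih =>
        rw [Submodule.pow_succ, Submodule.pow_succ]
        exact mul_le_mul' ih h1
    have hqmem : FreeAlgebra.lift ℂ T q ∈ (ℂ ∙ S) ^ (n + 2) :=
      hpow (n + 2) ⟨q, hq, rfl⟩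
    have hbot : (ℂ ∙ S) ^ (n + 2) ≤ ⊥ := by
      have heq : (ℂ ∙ S) ^ (n + 2) = (ℂ ∙ S) ^ n * ((ℂ ∙ S) * (ℂ ∙ S)) := by
        rw [Submodule.pow_succ, Submodule.pow_succ, mul_assoc]
      rw [heq]
      calc (ℂ ∙ S) ^ n * ((ℂ ∙ S) * (ℂ ∙ S)) ≤ (ℂ ∙ S) ^ n * ⊥ :=
            mul_le_mul' le_rfl h2
        _ = ⊥ := by rw [Submodule.mul_bot]
    simpa using hbot hqmem
  constructor
  · -- forward direction
    intro hZ
    have h0mem : ∀ p ∈ J, FreeAlgebra.lift ℂ (0 : Fin d → H →L[ℂ] H) p = 0 := by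
      have : (0 : Fin d → H →L[ℂ] H) ∈
          {T : Fin d → (H →L[ℂ] H) | ∀ p ∈ J, FreeAlgebra.lift ℂ T p = 0} := by
        rw [hZ]; rfl
      exact this
    -- degree-0 elements of J are zero
    have hconst : ∀ p ∈ J, p ∈ freeGrade d 0 → p = 0 := by
      intro p hp hp0
      rw [freeGrade, pow_zero, Submodule.one_eq_span] at hp0
      obtain ⟨lam, rfl⟩ := Submodule.mem_span_singleton.1 hp0
      have h := h0mem _ hp
      rw [map_smul, map_one] at h
      rcases smul_eq_zero.1 h with h3 | h3
      · rw [h3, zero_smul]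
      · exact absurd h3 h1CLM
    -- the linear map sending coefficients to linear polynomials
    set L : (Fin d → ℂ) →ₗ[ℂ] FreeAlgebra ℂ (Fin d) :=
      { toFun := fun a => ∑ i, a i • FreeAlgebra.ι ℂ i
        map_add' := by intro a b; simp [add_smul, Finset.sum_add_distrib]
        map_smul' := by intro c a; simp [smul_smul, Finset.smul_sum] } with hL
    set V : Submodule ℂ (Fin d → ℂ) := (Submodule.restrictScalars ℂ J).comap L with hV
    set e : Fin d → (Fin d → ℂ) := fun i j => if i = j then 1 else 0 with he
    have hVtop : V = ⊤ := by
      by_contra hVne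
      obtain ⟨φ, hφ0, hφ⟩ :=
        Submodule.exists_dual_map_eq_bot_of_lt_top (lt_top_iff_ne_top.2 hVne) inferInstance
      set c : Fin d → ℂ := fun i => φ (e i) with hc
      set T : Fin d → H →L[ℂ] H := fun i => c i • S with hT
      have hTmem : ∀ p ∈ J, FreeAlgebra.lift ℂ T p = 0 := by
        intro p hp
        have hp' : p ∈ Submodule.span ℂ
            {p : FreeAlgebra ℂ (Fin d) | p ∈ J ∧ ∃ n, p ∈ freeGrade d n} := by
          rw [← hhom]; exact hp
        have hker : p ∈ LinearMap.ker (FreeAlgebra.lift ℂ T).toLinearMap := by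
          refine Submodule.span_le.2 ?_ hp'
          rintro q ⟨hqJ, n, hqn⟩
          simp only [SetLike.mem_coe, LinearMap.mem_ker, AlgHom.toLinearMap_apply]
          match n with
          | 0 => rw [hconst q hqJ hqn, map_zero]
          | 1 =>
            rw [freeGrade, pow_one] at hqn
            obtain ⟨a, ha⟩ := (Submodule.mem_span_range_iff_exists_fun ℂ).1 hqn
            have haV : a ∈ V := by
              have hLa : L a = q := ha
              show L a ∈ Submodule.restrictScalars ℂ J
              rw [hLa]; exact hqJ
            have hφa : φ a = 0 := by
              have hmem : φ a ∈ V.map φ := ⟨a, haV, rfl⟩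
              rw [hφ] at hmem
              exact hmem
            have hsum : φ a = ∑ i, a i * c i := by
              have h1 : a = ∑ i, a i • e i := pi_eq_sum_univ a
              calc φ a = φ (∑ i, a i • e i) := congrArg φ h1
                _ = ∑ i, a i • φ (e i) := by rw [map_sum]; simp only [map_smul]
                _ = ∑ i, a i * c i := by simp [hc, smul_eq_mul]
            calc FreeAlgebra.lift ℂ T q
                = FreeAlgebra.lift ℂ T (∑ i, a i • FreeAlgebra.ι ℂ i) := by rw [ha]
              _ = ∑ i, a i • (c i • S) := by
                  rw [map_sum]
                  refine Finset.sum_congr rfl fun i _ => ?_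
                  rw [map_smul, FreeAlgebra.lift_ι_apply]
              _ = (∑ i, a i * c i) • S := by
                  rw [Finset.sum_smul]
                  refine Finset.sum_congr rfl fun i _ => ?_
                  rw [smul_smul]
              _ = 0 := by rw [← hsum, hφa, zero_smul]
          | (n + 2) => exact hdeg2 T (fun i => ⟨c i, rfl⟩) n q hqn
        simpa using hker
      have hT0 : T = 0 := by
        have hmem : T ∈ {T : Fin d → (H →L[ℂ] H) | ∀ p ∈ J, FreeAlgebra.lift ℂ T p = 0} :=
          hTmem
        rw [hZ] at hmem
        exact hmem
      have hc0 : ∀ i, c i = 0 := by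
        intro i
        have hTi : c i • S = 0 := congrFun hT0 i
        rcases smul_eq_zero.1 hTi with h3 | h3
        · exact h3
        · exact absurd h3 hS0
      apply hφ0
      refine LinearMap.ext fun a => ?_
      have h1 : a = ∑ i, a i • e i := pi_eq_sum_univ a
      have h2 : φ a = ∑ i, a i • φ (e i) := by
        rw [congrArg φ h1, map_sum]; simp only [map_smul]
      have h3 : ∀ i, φ (e i) = 0 := fun i => hc0 i
      simp [h2, h3]
    -- each generator is in J
    have hgen_mem : ∀ i, FreeAlgebra.ι ℂ i ∈ J := by
      intro i
      have h1 : e i ∈ V := hVtop ▸ Submodule.mem_top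
      have h2 : L (e i) ∈ Submodule.restrictScalars ℂ J := h1
      have h3 : L (e i) = FreeAlgebra.ι ℂ i := by
        show (∑ j, e i j • FreeAlgebra.ι ℂ j) = FreeAlgebra.ι ℂ i
        rw [he]
        simp [ite_smul]
      rwa [h3] at h2
    -- conclude J = span
    apply le_antisymm
    · intro p hp
      have hp' : p ∈ Submodule.span ℂ
          {p : FreeAlgebra ℂ (Fin d) | p ∈ J ∧ ∃ n, p ∈ freeGrade d n} := by
        rw [← hhom]; exact hp
      have hle : Submodule.span ℂ {p : FreeAlgebra ℂ (Fin d) | p ∈ J ∧ ∃ n, p ∈ freeGrade d n}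
          ≤ Submodule.restrictScalars ℂ
              (Ideal.span (Set.range (FreeAlgebra.ι ℂ : Fin d → FreeAlgebra ℂ (Fin d)))) := by
        refine Submodule.span_le.2 ?_
        rintro q ⟨hqJ, n, hqn⟩
        match n with
        | 0 =>
          have : q = 0 := hconst q hqJ hqn
          rw [this]
          exact Submodule.zero_mem _
        | (n + 1) => exact freeGrade_le_span_s8 d n hqn
      exact hle hp'
    · rw [Ideal.span_le]
      rintro _ ⟨i, rfl⟩
      exact hgen_mem i
  · -- backward direction
    intro hJ
    ext T
    simp only [Set.mem_setOf_eq, Set.mem_singleton_iff]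
    constructor
    · intro h
      funext i
      have hi : FreeAlgebra.ι ℂ i ∈ J := by
        rw [hJ]; exact Ideal.subset_span ⟨i, rfl⟩
      have := h _ hi
      rwa [FreeAlgebra.lift_ι_apply] at this
    · rintro rfl p hp
      rw [hJ] at hp
      have hker : Ideal.span (Set.range (FreeAlgebra.ι ℂ : Fin d → FreeAlgebra ℂ (Fin d)))
          ≤ RingHom.ker (FreeAlgebra.lift ℂ (0 : Fin d → H →L[ℂ] H) :
              FreeAlgebra ℂ (Fin d) →ₐ[ℂ] (H →L[ℂ] H)) := by
        rw [Ideal.span_le]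
        rintro _ ⟨i, rfl⟩
        simp [RingHom.mem_ker, FreeAlgebra.lift_ι_apply]
      exact hker hp
end

section
/- Let $q, r \in M_d(\mathbb{C})$ be admissible matrices with all $q_{ij}, r_{ij} \neq 1$ for $i \neq j$. Suppose $U = (u_{ij})$ is a $d \times d$ unitary matrix such that for each pair $i \neq j$, the vector $\sum_{k,l}(u_{ik}u_{jl} - r_{ij}u_{jk}u_{il})\, e_k \otimes e_l$ lies in $\mathrm{span}\{e_m \otimes e_n - q_{mn}e_n \otimes e_m : m \neq n\} \subseteq \mathbb{C}^d \otimes \mathbb{C}^d$. Then there is a permutation $\sigma \in S_d$ and unimodular scalars such that $U = U_\sigma^{-1}D$ with $D$ diagonal unitary, and $r_{ij} = q_{\sigma(i)\sigma(j)}$ for all $i \neq j$, i.e., $r = U_{\sigma^{-1}} q U_{\sigma^{-1}}^{-1}$. -/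
open scoped Matrix

lemma span_diag_zero {d : ℕ} (q : Matrix (Fin d) (Fin d) ℂ)
    (w : Fin d × Fin d → ℂ)
    (hw : w ∈ Submodule.span ℂ {v : Fin d × Fin d → ℂ | ∃ m n : Fin d, m ≠ n ∧
          v = fun p => (if p = (m, n) then (1 : ℂ) else 0)
                - q m n * (if p = (n, m) then (1 : ℂ) else 0)}) (k : Fin d) :
    w (k, k) = 0 := by
  set f : (Fin d × Fin d → ℂ) →ₗ[ℂ] ℂ := LinearMap.proj (k, k)
  have hS : {v : Fin d × Fin d → ℂ | ∃ m n : Fin d, m ≠ n ∧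
          v = fun p => (if p = (m, n) then (1 : ℂ) else 0)
                - q m n * (if p = (n, m) then (1 : ℂ) else 0)} ⊆ LinearMap.ker f := by
    rintro v ⟨m, n, hmn, rfl⟩
    simp only [SetLike.mem_coe, LinearMap.mem_ker, f, LinearMap.proj_apply]
    have h1 : ((k, k) : Fin d × Fin d) ≠ (m, n) := by
      simp only [ne_eq, Prod.mk.injEq, not_and]
      rintro rfl rfl; exact hmn rfl
    have h2 : ((k, k) : Fin d × Fin d) ≠ (n, m) := by
      simp only [ne_eq, Prod.mk.injEq, not_and]
      rintro rfl rfl; exact hmn rfl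
    simp [h1, h2]
  have := Submodule.span_le.mpr hS hw
  simpa [f] using this

lemma span_pair_rel {d : ℕ} (q : Matrix (Fin d) (Fin d) ℂ)
    (hqq : ∀ m n : Fin d, m ≠ n → q m n * q n m = 1)
    (w : Fin d × Fin d → ℂ)
    (hw : w ∈ Submodule.span ℂ {v : Fin d × Fin d → ℂ | ∃ m n : Fin d, m ≠ n ∧
          v = fun p => (if p = (m, n) then (1 : ℂ) else 0)
                - q m n * (if p = (n, m) then (1 : ℂ) else 0)})
    {m n : Fin d} (hmn : m ≠ n) :
    w (n, m) + q m n * w (m, n) = 0 := by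
  set f : (Fin d × Fin d → ℂ) →ₗ[ℂ] ℂ :=
    LinearMap.proj (n, m) + q m n • LinearMap.proj (m, n) with hf
  have hS : {v : Fin d × Fin d → ℂ | ∃ m' n' : Fin d, m' ≠ n' ∧
          v = fun p => (if p = (m', n') then (1 : ℂ) else 0)
                - q m' n' * (if p = (n', m') then (1 : ℂ) else 0)} ⊆ LinearMap.ker f := by
    rintro v ⟨m', n', hmn', rfl⟩
    simp only [SetLike.mem_coe, LinearMap.mem_ker, hf, LinearMap.add_apply,
      LinearMap.smul_apply, LinearMap.proj_apply, smul_eq_mul]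
    by_cases h1 : m' = m ∧ n' = n
    · obtain ⟨rfl, rfl⟩ := h1
      -- now m = m', n = n' eliminated; spanning pair is (m', n'), f uses (n', m') and (m', n')
      have e1 : ((n', m') : Fin d × Fin d) ≠ (m', n') := by
        simp only [ne_eq, Prod.mk.injEq, not_and]; rintro rfl; exact fun _ => hmn' rfl
      have e4 : ((m', n') : Fin d × Fin d) ≠ (n', m') := by
        simp only [ne_eq, Prod.mk.injEq, not_and]; rintro rfl; exact fun _ => hmn' rfl
      simp [e1, e4]
    · by_cases h2 : m' = n ∧ n' = m
      · obtain ⟨rfl, rfl⟩ := h2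
        have e2 : ((m', n') : Fin d × Fin d) ≠ (n', m') := by
          simp only [ne_eq, Prod.mk.injEq, not_and]; rintro rfl; exact fun _ => hmn' rfl
        have e3 : ((n', m') : Fin d × Fin d) ≠ (m', n') := by
          simp only [ne_eq, Prod.mk.injEq, not_and]; rintro rfl; exact fun _ => hmn' rfl
        simp [e2, e3]
        linear_combination -hqq m' n' hmn'
      · have e1 : ((n, m) : Fin d × Fin d) ≠ (m', n') := by
          simp only [ne_eq, Prod.mk.injEq, not_and]
          rintro rfl rfl; exact h2 ⟨rfl, rfl⟩
        have e2 : ((n, m) : Fin d × Fin d) ≠ (n', m') := by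
          simp only [ne_eq, Prod.mk.injEq, not_and]
          rintro rfl rfl; exact h1 ⟨rfl, rfl⟩
        have e3 : ((m, n) : Fin d × Fin d) ≠ (m', n') := by
          simp only [ne_eq, Prod.mk.injEq, not_and]
          rintro rfl rfl; exact h1 ⟨rfl, rfl⟩
        have e4 : ((m, n) : Fin d × Fin d) ≠ (n', m') := by
          simp only [ne_eq, Prod.mk.injEq, not_and]
          rintro rfl rfl; exact h2 ⟨rfl, rfl⟩
        simp [e1, e2, e3, e4]
  have := Submodule.span_le.mpr hS hw
  simpa [hf] using this

/-- If `q, r` are admissible matrices with all off-diagonal entries `≠ 1`, and `U` is a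
unitary matrix such that for each `i ≠ j` the vector
`∑_{k,l} (u_{ik} u_{jl} - r_{ij} u_{jk} u_{il}) e_k ⊗ e_l` lies in
`span{e_m ⊗ e_n - q_{mn} e_n ⊗ e_m : m ≠ n}` (tensors modeled as functions on pairs), then
`U` is a permutation matrix times a diagonal unitary — `U_{kl} = D_l` if `l = σ(k)` and `0`
otherwise, with `|D_l| = 1` — and `r_{ij} = q_{σ(i)σ(j)}` for all `i ≠ j`. -/
theorem stmt17 (d : ℕ) (q r : Matrix (Fin d) (Fin d) ℂ)
    (hqdiag : ∀ i, q i i = 0) (hqadm : ∀ i j, i ≠ j → q i j ≠ 0 ∧ q j i = (q i j)⁻¹)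
    (hq1 : ∀ i j, i ≠ j → q i j ≠ 1)
    (hrdiag : ∀ i, r i i = 0) (hradm : ∀ i j, i ≠ j → r i j ≠ 0 ∧ r j i = (r i j)⁻¹)
    (hr1 : ∀ i j, i ≠ j → r i j ≠ 1)
    (U : Matrix (Fin d) (Fin d) ℂ) (hU : Uᴴ * U = 1)
    (hrel : ∀ i j : Fin d, i ≠ j →
      (fun p : Fin d × Fin d => U i p.1 * U j p.2 - r i j * (U j p.1 * U i p.2)) ∈
        Submodule.span ℂ {v : Fin d × Fin d → ℂ | ∃ m n : Fin d, m ≠ n ∧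
          v = fun p => (if p = (m, n) then (1 : ℂ) else 0)
                - q m n * (if p = (n, m) then (1 : ℂ) else 0)}) :
    ∃ σ : Equiv.Perm (Fin d), (∃ D : Fin d → ℂ, (∀ l, ‖D l‖ = 1) ∧
        ∀ k l, U k l = if σ k = l then D l else 0) ∧
      ∀ i j, i ≠ j → r i j = q (σ i) (σ j) := by
  have hqq : ∀ m n : Fin d, m ≠ n → q m n * q n m = 1 := by
    intro m n h
    rw [(hqadm m n h).2, mul_inv_cancel₀ (hqadm m n h).1]
  have hcolsum : ∀ k l : Fin d,
      ∑ i, star (U i k) * U i l = (1 : Matrix (Fin d) (Fin d) ℂ) k l := by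
    intro k l
    rw [← hU]
    simp [Matrix.mul_apply, Matrix.conjTranspose_apply]
  have hzero : ∀ i j : Fin d, i ≠ j → ∀ k, U i k * U j k = 0 := by
    intro i j hij k
    have h0 := span_diag_zero q _ (hrel i j hij) k
    simp only at h0
    have h1 : (1 - r i j) * (U i k * U j k) = 0 := by linear_combination h0
    rcases mul_eq_zero.mp h1 with h | h
    · exact absurd (by linear_combination -h) (hr1 i j hij)
    · exact h
  have hcol : ∀ k, ∃ i, U i k ≠ 0 ∧ ∀ j, U j k ≠ 0 → j = i := by
    intro k
    have hsum : ∑ i, star (U i k) * U i k = 1 := by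
      simpa [Matrix.one_apply_eq] using hcolsum k k
    by_cases he : ∀ i, U i k = 0
    · simp [he] at hsum
    · push_neg at he
      obtain ⟨i, hi⟩ := he
      refine ⟨i, hi, fun j hj => ?_⟩
      by_contra hne
      exact hj (by
        have := hzero i j (fun h => hne h.symm) k
        rcases mul_eq_zero.mp this with h | h
        · exact absurd h hi
        · exact h)
  choose τ hτ1 hτ2 using hcol
  have hinj : Function.Injective τ := by
    intro l1 l2 h
    by_contra hne
    have h0 : ∑ i, star (U i l1) * U i l2 = 0 := by
      rw [hcolsum l1 l2, Matrix.one_apply_ne hne]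
    rw [Finset.sum_eq_single (τ l1)] at h0
    · have h2 := hτ1 l2
      rw [← h] at h2
      exact (mul_ne_zero (star_ne_zero.mpr (hτ1 l1)) h2) h0
    · intro b _ hb
      have hb0 : U b l1 = 0 := by
        by_contra hb0; exact hb (hτ2 l1 b hb0)
      simp [hb0]
    · simp
  have hbij := Finite.injective_iff_bijective.mp hinj
  let e : Equiv.Perm (Fin d) := Equiv.ofBijective τ hbij
  have he_app : ∀ l, e l = τ l := fun l => rfl
  refine ⟨e.symm, ⟨fun l => U (τ l) l, ?_, ?_⟩, ?_⟩
  · intro l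
    have hsum : ∑ i, star (U i l) * U i l = 1 := by
      simpa [Matrix.one_apply_eq] using hcolsum l l
    rw [Finset.sum_eq_single (τ l)] at hsum
    · have h1 : (Complex.normSq (U (τ l) l) : ℂ) = 1 := by
        rw [← hsum, Complex.normSq_eq_conj_mul_self]; rfl
      have h2 : Complex.normSq (U (τ l) l) = 1 := by exact_mod_cast h1
      have h3 := Complex.sq_norm (U (τ l) l)
      rw [h2] at h3
      nlinarith [norm_nonneg (U (τ l) l)]
    · intro b _ hb
      have hb0 : U b l = 0 := by
        by_contra hb0; exact hb (hτ2 l b hb0)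
      simp [hb0]
    · simp
  · intro k l
    by_cases h : e.symm k = l
    · have hk : k = τ l := by
        rw [← he_app, ← h, Equiv.apply_symm_apply]
      rw [if_pos h, hk]
    · rw [if_neg h]
      by_contra h0
      have hk := hτ2 l k h0
      apply h
      rw [hk, ← he_app, Equiv.symm_apply_apply]
  · intro i j hij
    set m := e.symm i with hm
    set n := e.symm j with hn
    have hmn : m ≠ n := fun h => hij (by
      have := congrArg e h
      simpa [hm, hn] using this)
    have hrelw := span_pair_rel q hqq _ (hrel i j hij) hmn
    simp only at hrelw
    have him : i = τ m := by rw [← he_app, hm, Equiv.apply_symm_apply]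
    have hjn : j = τ n := by rw [← he_app, hn, Equiv.apply_symm_apply]
    have hUim : U i m ≠ 0 := him ▸ hτ1 m
    have hUjn : U j n ≠ 0 := hjn ▸ hτ1 n
    have hUin : U i n = 0 := by
      by_contra h0
      exact hij ((hτ2 n i h0).trans hjn.symm)
    have hUjm : U j m = 0 := by
      by_contra h0
      exact hij ((hτ2 m j h0).trans him.symm).symm
    rw [hUin, hUjm] at hrelw
    have key : (q m n - r i j) * (U i m * U j n) = 0 := by linear_combination hrelw
    rcases mul_eq_zero.mp key with h | h
    · linear_combination -h
    · exact absurd h (mul_ne_zero hUim hUjn)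
end
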